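/- If G is a cofinitary subgroup of S_∞ (every non-identity element has only finitely many fixed points) and G is maximal among cofinitary groups, then G is uncountable (in fact not countable). -/

import Mathlib

open Equiv Function Set

namespace MCG

abbrev P := Equiv.Perm ℕ

/-- finite partial injections on ℕ, with explicit inverse. -/
structure PI where
  f : ℕ → Option ℕ
  g : ℕ → Option ℕ
  compat : ∀ x y, f x = some y ↔ g y = some x
  finD : {x | f x ≠ none}.Finite
  finR : {y | g y ≠ none}.Finite

namespace PI

def Dom (p : PI) : Set ℕ := {x | p.f x ≠ none}
def Ran (p : PI) : Set ℕ := {y | p.g y ≠ none}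

lemma dom_fin (p : PI) : p.Dom.Finite := p.finD
lemma ran_fin (p : PI) : p.Ran.Finite := p.finR

lemma mem_dom {p : PI} {x y : ℕ} (h : p.f x = some y) : x ∈ p.Dom := by
  simp [Dom, h]
lemma mem_ran {p : PI} {x y : ℕ} (h : p.g y = some x) : y ∈ p.Ran := by
  simp [Ran, h]
lemma not_dom {p : PI} {x : ℕ} (h : x ∉ p.Dom) : p.f x = none := by
  by_contra hc; exact h hc
lemma not_ran {p : PI} {y : ℕ} (h : y ∉ p.Ran) : p.g y = none := by
  by_contra hc; exact h hc

def emptyPI : PI where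
  f := fun _ => none
  g := fun _ => none
  compat := by simp
  finD := by simp
  finR := by simp

def ext (p : PI) (a b : ℕ) (ha : p.f a = none) (hb : p.g b = none) : PI where
  f := fun x => if x = a then some b else p.f x
  g := fun y => if y = b then some a else p.g y
  compat := by
    intro x y
    split_ifs with hx hy hy
    · subst hx; subst hy; simp
    · constructor
      · intro h; injection h with h; exact absurd h.symm hy
      · intro h; rw [hx] at h; exact absurd ((p.compat a y).mpr h) (by simp [ha])
    · constructor
      · intro h; rw [hy] at h; exact absurd ((p.compat x b).mp h) (by simp [hb])
      · intro h; injection h with h; exact absurd h.symm hx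
    · exact p.compat x y
  finD := (p.finD.insert a).subset
    (by intro x; by_cases hx : x = a <;> simp [hx, Set.mem_setOf_eq])
  finR := (p.finR.insert b).subset
    (by intro y; by_cases hy : y = b <;> simp [hy, Set.mem_setOf_eq])

lemma ext_f (p : PI) (a b : ℕ) (ha hb) (x : ℕ) :
    (p.ext a b ha hb).f x = if x = a then some b else p.f x := rfl
lemma ext_g (p : PI) (a b : ℕ) (ha hb) (y : ℕ) :
    (p.ext a b ha hb).g y = if y = b then some a else p.g y := rfl

def le (p q : PI) : Prop := ∀ ⦃x y : ℕ⦄, p.f x = some y → q.f x = some y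

lemma le.g {p q : PI} (h : p.le q) {x y : ℕ} (hg : p.g y = some x) : q.g y = some x :=
  (q.compat x y).mp (h ((p.compat x y).mpr hg))

lemma le_refl (p : PI) : p.le p := fun _ _ h => h
lemma le_trans {p q r : PI} (h1 : p.le q) (h2 : q.le r) : p.le r := fun _ _ h => h2 (h1 h)

lemma ext_le (p : PI) (a b : ℕ) (ha hb) : p.le (p.ext a b ha hb) := by
  intro x y h
  have hx : x ≠ a := by rintro rfl; rw [ha] at h; cases h
  rw [ext_f, if_neg hx]; exact h

def apF (p : PI) : Bool → ℕ → Option ℕ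
  | true => p.f
  | false => p.g

def swap (p : PI) : PI where
  f := p.g
  g := p.f
  compat := fun x y => (p.compat y x).symm
  finD := p.finR
  finR := p.finD

lemma swap_apF (p : PI) (ε : Bool) : p.swap.apF ε = p.apF (!ε) := by
  cases ε <;> rfl

lemma swap_ext (p : PI) (a b : ℕ) (ha hb) :
    (p.ext a b ha hb).swap = (p.swap).ext b a hb ha := rfl

end PI

/-! ### words and partial evaluation -/

abbrev Lt := List (Bool × P)

def evT (p : PI) : Lt → ℕ → Option ℕ
  | [], y => some y
  | (ε, g) :: l, y => (p.apF ε y).bind fun z => evT p l (g z)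

@[simp] lemma evT_nil (p : PI) (y : ℕ) : evT p [] y = some y := rfl
@[simp] lemma evT_cons (p : PI) (ε : Bool) (g : P) (l : Lt) (y : ℕ) :
    evT p ((ε, g) :: l) y = (p.apF ε y).bind fun z => evT p l (g z) := rfl

lemma evT_cons_eq_some {p : PI} {ε : Bool} {g : P} {l : Lt} {y z : ℕ}
    (h : evT p ((ε, g) :: l) y = some z) :
    ∃ v, p.apF ε y = some v ∧ evT p l (g v) = some z := by
  rw [evT_cons] at h
  rcases hv : p.apF ε y with _ | v
  · rw [hv] at h; simp at h
  · rw [hv] at h; exact ⟨v, rfl, h⟩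

lemma apF_mono {p q : PI} (h : p.le q) {ε : Bool} {y v : ℕ}
    (hv : p.apF ε y = some v) : q.apF ε y = some v := by
  cases ε
  · exact h.g hv
  · exact h hv

lemma evT_mono {p q : PI} (h : p.le q) :
    ∀ {l : Lt} {y z : ℕ}, evT p l y = some z → evT q l y = some z := by
  intro l
  induction l with
  | nil => intro y z hz; exact hz
  | cons e l ih =>
    obtain ⟨ε, g⟩ := e
    intro y z hz
    obtain ⟨v, hv, hrest⟩ := evT_cons_eq_some hz
    rw [evT_cons, apF_mono h hv]
    exact ih hrest

lemma firststep {p : PI} {ε : Bool} {g : P} {l : Lt} {y z : ℕ}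
    (h : evT p ((ε, g) :: l) y = some z) : y ∈ p.Dom ∪ p.Ran := by
  obtain ⟨v, hv, -⟩ := evT_cons_eq_some h
  cases ε
  · exact Or.inr (PI.mem_ran ((p.compat v y).mp ((p.compat v y).mpr hv)))
  · exact Or.inl (PI.mem_dom hv)

lemma apF_some_mem {p : PI} {ε : Bool} {y v : ℕ} (hv : p.apF ε y = some v) :
    v ∈ p.Dom ∪ p.Ran := by
  cases ε
  · exact Or.inl (PI.mem_dom ((p.compat v y).mpr hv))
  · exact Or.inr (PI.mem_ran ((p.compat y v).mp hv))

lemma laststep {p : PI} :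
    ∀ {l : Lt} {y z : ℕ}, l ≠ [] → evT p l y = some z →
      ∃ g v, g ∈ l.map Prod.snd ∧ z = g v ∧ v ∈ p.Dom ∪ p.Ran := by
  intro l
  induction l with
  | nil => intro y z h; exact absurd rfl h
  | cons e l ih =>
    obtain ⟨ε, g⟩ := e
    intro y z _ hz
    obtain ⟨v, hv, hrest⟩ := evT_cons_eq_some hz
    rcases eq_or_ne l [] with rfl | hl
    · refine ⟨g, v, by simp, ?_, apF_some_mem hv⟩
      simpa using hrest.symm
    · obtain ⟨g', v', hg', hz', hv'⟩ := ih hl hrest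
      exact ⟨g', v', by simp [hg'], hz', hv'⟩

/-! ### reduced words -/

def Red (l : Lt) : Prop := l.Chain' fun s t => s.2 = 1 → t.1 = s.1

abbrev Wd := P × Lt

def consts (w : Wd) : List P := w.1 :: w.2.map Prod.snd

def evW (p : PI) (w : Wd) (x : ℕ) : Option ℕ := evT p w.2 (w.1 x)

def okc (cl : List P) (c : P) : Prop := c = 1 ∨ c ∈ cl ∨ c⁻¹ ∈ cl

def prodOf (cl : List P) (u : P) : Prop := ∃ c₁ c₂, okc cl c₁ ∧ okc cl c₂ ∧ u = c₁ * c₂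

lemma prodOf_one (cl : List P) : prodOf cl 1 := ⟨1, 1, Or.inl rfl, Or.inl rfl, (one_mul 1).symm⟩

lemma prodOf_single {cl : List P} {c : P} (h : okc cl c) : prodOf cl c :=
  ⟨c, 1, h, Or.inl rfl, (mul_one c).symm⟩

/-- the freshness conditions needed for the one-step extension lemma. -/
def FreshFor (p : PI) (a b : ℕ) (cl : List P) : Prop :=
  ∀ u : P, prodOf cl u →
    u b ∉ p.Dom ∧ u b ∉ p.Ran ∧ u b ≠ a ∧ (u ≠ 1 → u b ≠ b)

lemma runB (p : PI) (a b : ℕ) (ha : p.f a = none) (hb : p.g b = none)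
    (cl : List P) (H : FreshFor p a b cl) :
    ∀ l : Lt, Red l → (∀ c ∈ l.map Prod.snd, c ∈ cl) →
      ∀ y z : ℕ, y ≠ b → evT (p.ext a b ha hb) l y = some z →
      evT p l y = some z ∨
        ∃ l₁ g, l = l₁ ++ [(true, g)] ∧ evT p l₁ y = some a ∧ z = g b := by
  have H1 := H 1 (prodOf_one cl)
  simp only [Equiv.Perm.one_apply] at H1
  intro l
  induction l with
  | nil => intro _ _ y z _ h; exact Or.inl h
  | cons e l' IH =>
    obtain ⟨ε, g⟩ := e
    intro hred hcl y z hy h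
    have hclg : g ∈ cl := hcl g (by simp)
    have hredt : Red l' := hred.tail
    have hclt : ∀ c ∈ l'.map Prod.snd, c ∈ cl := fun c hc => hcl c (by simp [hc])
    obtain ⟨v, hv, hrest⟩ := evT_cons_eq_some h
    have Hginv := H g⁻¹ (prodOf_single (Or.inr (Or.inr (by simp [hclg]))))
    cases ε with
    | false =>
      have hvp : p.g y = some v := by
        have : (if y = b then some a else p.g y) = some v := hv
        rwa [if_neg hy] at this
      have hgv : g v ≠ b := by
        intro heq
        have hv2 : v = g⁻¹ b := by
          have := congrArg (g⁻¹ : P) heq; simpa using this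
        have : v ∈ p.Dom := PI.mem_dom ((p.compat v y).mpr hvp)
        rw [hv2] at this
        exact Hginv.1 this
      rcases IH hredt hclt (g v) z hgv hrest with hL | ⟨l₁, g', hsh, hev, hz⟩
      · left; rw [evT_cons]
        have : p.apF false y = some v := hvp
        rw [this]; exact hL
      · right
        refine ⟨(false, g) :: l₁, g', by rw [hsh]; rfl, ?_, hz⟩
        rw [evT_cons]
        have : p.apF false y = some v := hvp
        rw [this]; exact hev
    | true =>
      by_cases hy2 : y = a
      · have hvb : v = b := by
          have : (if y = a then some b else p.f y) = some v := hv
          rw [if_pos hy2] at this; injection this with h'; exact h'.symm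
        rw [hvb] at hrest
        match l', hred, hrest with
        | [], hred, hrest =>
          right
          refine ⟨[], g, rfl, by rw [hy2]; rfl, ?_⟩
          simpa using hrest.symm
        | (ε'', g'') :: l'', hred, hrest =>
          exfalso
          obtain ⟨v', hv', -⟩ := evT_cons_eq_some hrest
          by_cases hg1 : g = 1
          · subst hg1
            have hε : ε'' = true := (List.isChain_cons_cons.mp hred).1 rfl
            subst hε
            have : (if (1 : P) b = a then some b else p.f ((1 : P) b)) = some v' := hv'
            rw [Equiv.Perm.one_apply] at this
            rw [if_neg H1.2.2.1, PI.not_dom H1.1] at this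
            cases this
          · have Hg := H g (prodOf_single (Or.inr (Or.inl hclg)))
            cases ε'' with
            | true =>
              have : (if g b = a then some b else p.f (g b)) = some v' := hv'
              rw [if_neg Hg.2.2.1, PI.not_dom Hg.1] at this
              cases this
            | false =>
              have : (if g b = b then some a else p.g (g b)) = some v' := hv'
              rw [if_neg (Hg.2.2.2 hg1), PI.not_ran Hg.2.1] at this
              cases this
      · have hvp : p.f y = some v := by
          have : (if y = a then some b else p.f y) = some v := hv
          rwa [if_neg hy2] at this
        have hgv : g v ≠ b := by
          intro heq
          have hv2 : v = g⁻¹ b := by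
            have := congrArg (g⁻¹ : P) heq; simpa using this
          have : v ∈ p.Ran := PI.mem_ran ((p.compat y v).mp hvp)
          rw [hv2] at this
          exact Hginv.2.1 this
        rcases IH hredt hclt (g v) z hgv hrest with hL | ⟨l₁, g', hsh, hev, hz⟩
        · left; rw [evT_cons]
          have : p.apF true y = some v := hvp
          rw [this]; exact hL
        · right
          refine ⟨(true, g) :: l₁, g', by rw [hsh]; rfl, ?_, hz⟩
          rw [evT_cons]
          have : p.apF true y = some v := hvp
          rw [this]; exact hev

lemma stage (p : PI) (a b : ℕ) (ha : p.f a = none) (hb : p.g b = none)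
    (w : Wd) (hred : Red w.2) (H : FreshFor p a b (consts w)) (x : ℕ)
    (hx : evW (p.ext a b ha hb) w x = some x) :
    evW p w x = some x ∨
      ∃ g₁ l₁ gk, w.2 = (false, g₁) :: (l₁ ++ [(true, gk)]) ∧ x = gk b ∧
        evT p l₁ (g₁ a) = some a := by
  obtain ⟨g0, l⟩ := w
  have H1 := H 1 (prodOf_one _)
  simp only [Equiv.Perm.one_apply] at H1
  have hg0 : g0 ∈ consts (g0, l) := by simp [consts]
  have hclsub : ∀ c ∈ l.map Prod.snd, c ∈ consts (g0, l) := fun c hc => by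
    simp [consts, hc]
  by_cases hy0 : g0 x = b
  · -- evaluation starts in the cloud
    rw [evW, hy0] at hx
    cases l with
    | nil =>
      left
      simp only [evT_nil] at hx
      injection hx with hx
      simp [evW, hy0, hx]
    | cons e l' =>
      obtain ⟨ε₁, g₁⟩ := e
      obtain ⟨v, hv, hrest⟩ := evT_cons_eq_some hx
      have hg₁ : g₁ ∈ consts (g0, (ε₁, g₁) :: l') := by simp [consts]
      cases ε₁ with
      | true =>
        exfalso
        have : (if b = a then some b else p.f b) = some v := hv
        rw [if_neg H1.2.2.1, PI.not_dom H1.1] at this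
        cases this
      | false =>
        have hva : v = a := by
          have : (if b = b then some a else p.g b) = some v := hv
          rw [if_pos rfl] at this; injection this with h'; exact h'.symm
        rw [hva] at hrest
        have Hg₁inv := H g₁⁻¹ (prodOf_single (Or.inr (Or.inr (by
          simpa using hg₁))))
        have hg₁a : g₁ a ≠ b := by
          intro heq
          apply Hg₁inv.2.2.1
          have := congrArg (g₁⁻¹ : P) heq
          simpa using this.symm
        have hclsub' : ∀ c ∈ l'.map Prod.snd, c ∈ consts (g0, (false, g₁) :: l') :=
          fun c hc => by simp [consts, hc]
        rcases runB p a b ha hb _ H l' hred.tail hclsub' (g₁ a) x hg₁a hrest with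
          hL | ⟨l₁, gk, hsh, hev, hz⟩
        · exfalso
          cases l' with
          | nil =>
            simp only [evT_nil] at hL
            injection hL with hL
            -- hL : g₁ a = x, hy0 : g0 x = b
            have hu := H (g₁⁻¹ * g0⁻¹) ⟨g₁⁻¹, g0⁻¹,
              Or.inr (Or.inr (by simpa using hg₁)),
              Or.inr (Or.inr (by simpa using hg0)), rfl⟩
            apply hu.2.2.1
            have h1 : g0⁻¹ b = g₁ a := by
              rw [← hy0, ← hL]; simp
            rw [Equiv.Perm.mul_apply, h1]; simp
          | cons e'' l'' =>
            obtain ⟨g', v', hg', hzv, hv'⟩ := laststep (by simp) hL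
            have hu := H (g'⁻¹ * g0⁻¹) ⟨g'⁻¹, g0⁻¹,
              Or.inr (Or.inr (by simp only [inv_inv]; exact hclsub' g' (by simpa using hg'))),
              Or.inr (Or.inr (by simpa using hg0)), rfl⟩
            have h1 : (g'⁻¹ * g0⁻¹) b = v' := by
              rw [Equiv.Perm.mul_apply]
              rw [← hy0, hzv]; simp
            rcases hv' with hD | hR
            · exact hu.1 (h1 ▸ hD)
            · exact hu.2.1 (h1 ▸ hR)
        · right
          exact ⟨g₁, l₁, gk, by rw [hsh], hz, hev⟩
  · -- evaluation starts outside the cloud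
    rcases runB p a b ha hb _ H l hred hclsub (g0 x) x hy0 (by simpa [evW] using hx) with
      hL | ⟨l₁, gk, hsh, hev, hz⟩
    · left; simpa [evW] using hL
    · exfalso
      have hgk : gk ∈ consts (g0, l) := hclsub gk (by simp [hsh])
      have hu := H (g0 * gk) ⟨g0, gk, Or.inr (Or.inl hg0), Or.inr (Or.inl hgk), rfl⟩
      have h1 : (g0 * gk) b = g0 x := by rw [Equiv.Perm.mul_apply, ← hz]
      cases l₁ with
      | nil =>
        simp only [evT_nil] at hev
        injection hev with hev
        exact hu.2.2.1 (h1.trans hev)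
      | cons e'' l'' =>
        rcases firststep hev with hD | hR
        · exact hu.1 (h1 ▸ hD)
        · exact hu.2.1 (h1 ▸ hR)

def flip (l : Lt) : Lt := l.map fun e => (!e.1, e.2)

@[simp] lemma flip_nil : flip [] = [] := rfl
@[simp] lemma flip_cons (ε : Bool) (g : P) (l : Lt) :
    flip ((ε, g) :: l) = (!ε, g) :: flip l := rfl
@[simp] lemma flip_append (l₁ l₂ : Lt) : flip (l₁ ++ l₂) = flip l₁ ++ flip l₂ :=
  List.map_append
@[simp] lemma flip_flip (l : Lt) : flip (flip l) = l := by
  induction l with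
  | nil => rfl
  | cons e l ih => obtain ⟨ε, g⟩ := e; simp [ih]

lemma flip_snd (l : Lt) : (flip l).map Prod.snd = l.map Prod.snd := by
  induction l with
  | nil => rfl
  | cons e l ih => obtain ⟨ε, g⟩ := e; simp only [flip_cons, List.map_cons]; rw [ih]

lemma red_flip {l : Lt} (h : Red l) : Red (flip l) := by
  rw [Red, flip, List.Chain', List.isChain_map]
  exact h.imp fun s t hst h1 => by rw [hst h1]

lemma evT_swap (p : PI) : ∀ (l : Lt) (y : ℕ), evT p.swap l y = evT p (flip l) y := by
  intro l
  induction l with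
  | nil => intro y; rfl
  | cons e l ih =>
    obtain ⟨ε, g⟩ := e
    intro y
    rw [flip_cons, evT_cons, evT_cons, PI.swap_apF]
    cases hv : p.apF (!ε) y with
    | none => simp
    | some v => simp only [Option.bind_some]; exact ih (g v)

/-! ### the construction -/

/-- context: a countable cofinitary group with an enumeration of words. -/
structure Ctx where
  G : Subgroup P
  hG : ∀ g ∈ G, g ≠ 1 → {n : ℕ | g n = n}.Finite
  enum : ℕ → Wd
  henum : ∀ i, ∀ c ∈ consts (enum i), c ∈ G
  hsurj : ∀ w : Wd, (∀ c ∈ consts w, c ∈ G) → ∃ i, enum i = w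

namespace Ctx

variable (C : Ctx)

lemma okc_mem_G {cl : List P} (hcl : ∀ c ∈ cl, c ∈ C.G) {c : P} (h : okc cl c) :
    c ∈ C.G := by
  rcases h with rfl | h | h
  · exact C.G.one_mem
  · exact hcl c h
  · have := hcl _ h; simpa using C.G.inv_mem this

lemma prodOf_mem_G {cl : List P} (hcl : ∀ c ∈ cl, c ∈ C.G) {u : P} (h : prodOf cl u) :
    u ∈ C.G := by
  obtain ⟨c₁, c₂, h₁, h₂, rfl⟩ := h
  exact C.G.mul_mem (C.okc_mem_G hcl h₁) (C.okc_mem_G hcl h₂)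

lemma okcSet_fin (cl : List P) : {c : P | okc cl c}.Finite := by
  have : {c : P | okc cl c} ⊆ {(1 : P)} ∪ {c | c ∈ cl} ∪ ((fun c : P => c⁻¹) ⁻¹' {c | c ∈ cl}) := by
    intro c hc
    rcases hc with rfl | h | h
    · exact Or.inl (Or.inl rfl)
    · exact Or.inl (Or.inr h)
    · exact Or.inr h
  refine Set.Finite.subset ?_ this
  exact ((Set.finite_singleton _).union (cl.finite_toSet)).union
    ((cl.finite_toSet).preimage (fun x _ y _ h => by simpa using congrArg (fun z : P => z⁻¹) h))

lemma prodSet_fin (cl : List P) : {u : P | prodOf cl u}.Finite := by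
  have : {u : P | prodOf cl u} ⊆ Set.image2 (· * ·) {c | okc cl c} {c | okc cl c} := by
    rintro u ⟨c₁, c₂, h₁, h₂, rfl⟩
    exact Set.mem_image2_of_mem h₁ h₂
  exact Set.Finite.subset (Set.Finite.image2 _ (okcSet_fin cl) (okcSet_fin cl)) this

def Bad (q : PI) (t d : ℕ) : Set ℕ :=
  (q.Dom ∪ q.Ran ∪ {d}) ∪
    ⋃ i ∈ Finset.range t, {c | ∃ u : P, prodOf (consts (C.enum i)) u ∧
      (u c ∈ q.Dom ∪ q.Ran ∪ {d} ∨ (u ≠ 1 ∧ u c = c))}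

lemma bad_fin (q : PI) (t d : ℕ) : (C.Bad q t d).Finite := by
  have hA : (q.Dom ∪ q.Ran ∪ {d}).Finite :=
    (q.dom_fin.union q.ran_fin).union (Set.finite_singleton d)
  refine hA.union ?_
  refine Set.Finite.biUnion (Finset.range t).finite_toSet ?_
  intro i _
  have : {c : ℕ | ∃ u : P, prodOf (consts (C.enum i)) u ∧
      (u c ∈ q.Dom ∪ q.Ran ∪ {d} ∨ (u ≠ 1 ∧ u c = c))} =
      ⋃ u ∈ {u : P | prodOf (consts (C.enum i)) u},
        ({c : ℕ | u c ∈ q.Dom ∪ q.Ran ∪ {d}} ∪ {c : ℕ | u ≠ 1 ∧ u c = c}) := by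
    ext c
    simp only [Set.mem_setOf_eq, Set.mem_iUnion, Set.mem_union, Set.mem_setOf_eq]
    constructor
    · rintro ⟨u, hu, h⟩; exact ⟨u, hu, h⟩
    · rintro ⟨u, hu, h⟩; exact ⟨u, hu, h⟩
  rw [this]
  refine Set.Finite.biUnion (prodSet_fin _) ?_
  intro u hu
  refine Set.Finite.union ?_ ?_
  · exact hA.preimage (Set.injOn_of_injective (Equiv.injective u))
  · by_cases hu1 : u = 1
    · subst hu1; simp
    · refine (C.hG u (C.prodOf_mem_G (C.henum i) hu) hu1).subset ?_
      intro c hc; exact hc.2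

lemma exists_fresh (q : PI) (t d : ℕ) : ∃ c : ℕ, c ∉ C.Bad q t d :=
  ((C.bad_fin q t d).infinite_compl.nonempty).imp (fun _ hc => hc)

noncomputable def chosen (q : PI) (t : ℕ) : ℕ :=
  (C.exists_fresh q t (t / 2)).choose

lemma chosen_spec (q : PI) (t : ℕ) : C.chosen q t ∉ C.Bad q t (t / 2) :=
  (C.exists_fresh q t (t / 2)).choose_spec

lemma chosen_not_dom (q : PI) (t : ℕ) : q.f (C.chosen q t) = none := by
  apply PI.not_dom
  intro hc
  exact C.chosen_spec q t (Or.inl (Or.inl (Or.inl hc)))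

lemma chosen_not_ran (q : PI) (t : ℕ) : q.g (C.chosen q t) = none := by
  apply PI.not_ran
  intro hc
  exact C.chosen_spec q t (Or.inl (Or.inl (Or.inr hc)))

lemma chosen_freshD (q : PI) (t : ℕ) {i : ℕ} (hi : i < t) :
    FreshFor q (t / 2) (C.chosen q t) (consts (C.enum i)) := by
  intro u hu
  have hnot : ¬ (u (C.chosen q t) ∈ q.Dom ∪ q.Ran ∪ {t / 2} ∨
      (u ≠ 1 ∧ u (C.chosen q t) = C.chosen q t)) := by
    intro hc
    exact C.chosen_spec q t (Or.inr (Set.mem_biUnion (Finset.mem_range.mpr hi) ⟨u, hu, hc⟩))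
  push_neg at hnot
  obtain ⟨h1, h2⟩ := hnot
  rw [Set.mem_union, Set.mem_union] at h1
  push_neg at h1
  exact ⟨h1.1.1, h1.1.2, h1.2, h2⟩

lemma chosen_freshR (q : PI) (t : ℕ) {i : ℕ} (hi : i < t) :
    FreshFor q.swap (t / 2) (C.chosen q t) (consts (C.enum i)) := by
  intro u hu
  obtain ⟨h1, h2, h3, h4⟩ := C.chosen_freshD q t hi u hu
  exact ⟨h2, h1, h3, h4⟩

noncomputable def step (q : PI) (t : ℕ) : PI :=
  if t % 2 = 0 then
    if h : q.f (t / 2) = none then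
      q.ext (t / 2) (C.chosen q t) h (C.chosen_not_ran q t)
    else q
  else
    if h : q.g (t / 2) = none then
      q.ext (C.chosen q t) (t / 2) (C.chosen_not_dom q t) h
    else q

noncomputable def pt : ℕ → PI
  | 0 => PI.emptyPI
  | t + 1 => C.step (pt t) t

lemma pt_le_succ (t : ℕ) : (C.pt t).le (C.pt (t + 1)) := by
  show (C.pt t).le (C.step (C.pt t) t)
  unfold step
  split_ifs with h1 h2 h3
  · exact PI.ext_le _ _ _ _ _
  · exact PI.le_refl _
  · exact PI.ext_le _ _ _ _ _
  · exact PI.le_refl _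

lemma pt_mono {s t : ℕ} (h : s ≤ t) : (C.pt s).le (C.pt t) := by
  induction t with
  | zero => rw [Nat.le_zero.mp h]; exact PI.le_refl _
  | succ t ih =>
    rcases Nat.lt_or_ge s (t + 1) with h' | h'
    · exact PI.le_trans (ih (Nat.lt_succ_iff.mp h')) (C.pt_le_succ t)
    · rw [Nat.le_antisymm h h']; exact PI.le_refl _

lemma pt_f_total (n : ℕ) : (C.pt (2 * n + 1)).f n ≠ none := by
  have h2 : 2 * n / 2 = n := by omega
  have hmod : 2 * n % 2 = 0 := by omega
  show (C.step (C.pt (2 * n)) (2 * n)).f n ≠ none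
  unfold step
  rw [if_pos hmod]
  simp only [h2]
  split_ifs with h
  · rw [PI.ext_f, if_pos rfl]; simp
  · exact h

lemma pt_g_total (n : ℕ) : (C.pt (2 * n + 2)).g n ≠ none := by
  have h2 : (2 * n + 1) / 2 = n := by omega
  have hmod : ¬ (2 * n + 1) % 2 = 0 := by omega
  show (C.step (C.pt (2 * n + 1)) (2 * n + 1)).g n ≠ none
  unfold step
  rw [if_neg hmod]
  simp only [h2]
  split_ifs with h
  · rw [PI.ext_g, if_pos rfl]; simp
  · exact h

noncomputable def F0 (n : ℕ) : ℕ := ((C.pt (2 * n + 1)).f n).getD 0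
noncomputable def G0 (n : ℕ) : ℕ := ((C.pt (2 * n + 2)).g n).getD 0

lemma F0_eq (n : ℕ) : (C.pt (2 * n + 1)).f n = some (C.F0 n) := by
  rcases h : (C.pt (2 * n + 1)).f n with _ | v
  · exact absurd h (C.pt_f_total n)
  · simp [F0, h]

lemma G0_eq (n : ℕ) : (C.pt (2 * n + 2)).g n = some (C.G0 n) := by
  rcases h : (C.pt (2 * n + 2)).g n with _ | v
  · exact absurd h (C.pt_g_total n)
  · simp [G0, h]

lemma graph_f {t x y : ℕ} (h : (C.pt t).f x = some y) : C.F0 x = y := by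
  have h1 := C.pt_mono (le_max_left t (2 * x + 1)) h
  have h2 := C.pt_mono (le_max_right t (2 * x + 1)) (C.F0_eq x)
  rw [h1] at h2
  injection h2 with h2
  exact h2.symm

lemma graph_g {t x y : ℕ} (h : (C.pt t).g y = some x) : C.G0 y = x := by
  have h1 := (C.pt_mono (le_max_left t (2 * y + 2))).g h
  have h2 := (C.pt_mono (le_max_right t (2 * y + 2))).g (C.G0_eq y)
  rw [h1] at h2
  injection h2 with h2
  exact h2.symm

lemma G0_F0 (n : ℕ) : C.G0 (C.F0 n) = n :=
  C.graph_g (((C.pt (2 * n + 1)).compat n (C.F0 n)).mp (C.F0_eq n))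

lemma F0_G0 (n : ℕ) : C.F0 (C.G0 n) = n :=
  C.graph_f (((C.pt (2 * n + 2)).compat (C.G0 n) n).mpr (C.G0_eq n))

noncomputable def FF : P := ⟨C.F0, C.G0, C.G0_F0, C.F0_G0⟩

lemma graph_f' {t x y : ℕ} (h : (C.pt t).f x = some y) : C.FF x = y := C.graph_f h
lemma graph_g' {t x y : ℕ} (h : (C.pt t).g y = some x) : C.FF.symm y = x := C.graph_g h
lemma f_FF (x : ℕ) : (C.pt (2 * x + 1)).f x = some (C.FF x) := C.F0_eq x
lemma g_FF (y : ℕ) : (C.pt (2 * (C.FF.symm y) + 1)).g y = some (C.FF.symm y) := by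
  have h := C.f_FF (C.FF.symm y)
  rw [show C.FF (C.FF.symm y) = y from C.FF.apply_symm_apply y] at h
  exact ((C.pt _).compat _ _).mp h

end Ctx

def evF (F : P) : Lt → ℕ → ℕ
  | [], y => y
  | (ε, g) :: l, y => evF F l (g (if ε then F y else F.symm y))

@[simp] lemma evF_nil (F : P) (y : ℕ) : evF F [] y = y := rfl
@[simp] lemma evF_cons (F : P) (ε : Bool) (g : P) (l : Lt) (y : ℕ) :
    evF F ((ε, g) :: l) y = evF F l (g (if ε then F y else F.symm y)) := rfl

namespace Ctx

variable (C : Ctx)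

lemma evT_evF {t : ℕ} : ∀ {l : Lt} {y z : ℕ}, evT (C.pt t) l y = some z → evF C.FF l y = z := by
  intro l
  induction l with
  | nil => intro y z h; injection h
  | cons e l ih =>
    obtain ⟨ε, g⟩ := e
    intro y z h
    obtain ⟨v, hv, hr⟩ := evT_cons_eq_some h
    have hy' : (if ε then C.FF y else C.FF.symm y) = v := by
      cases ε
      · exact C.graph_g' hv
      · exact C.graph_f' hv
    rw [evF_cons, hy']
    exact ih hr

lemma exists_evT : ∀ (l : Lt) (y : ℕ), ∃ t, evT (C.pt t) l y = some (evF C.FF l y) := by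
  intro l
  induction l with
  | nil => intro y; exact ⟨0, rfl⟩
  | cons e l ih =>
    obtain ⟨ε, g⟩ := e
    intro y
    obtain ⟨t₂, h₂⟩ := ih (g (if ε then C.FF y else C.FF.symm y))
    cases ε with
    | false =>
      refine ⟨max (2 * (C.FF.symm y) + 1) t₂, ?_⟩
      rw [evT_cons]
      have h₁ := (C.pt_mono (le_max_left (2 * (C.FF.symm y) + 1) t₂)).g (C.g_FF y)
      have : (C.pt (max (2 * (C.FF.symm y) + 1) t₂)).apF false y = some (C.FF.symm y) := h₁
      rw [this]
      simp only [Option.bind_some, evF_cons, if_neg (by simp : ¬ (false : Bool) = true)]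
      exact evT_mono (C.pt_mono (le_max_right _ _)) h₂
    | true =>
      refine ⟨max (2 * y + 1) t₂, ?_⟩
      rw [evT_cons]
      have h₁ := C.pt_mono (le_max_left (2 * y + 1) t₂) (C.f_FF y)
      have : (C.pt (max (2 * y + 1) t₂)).apF true y = some (C.FF y) := h₁
      rw [this]
      simp only [Option.bind_some, evF_cons, if_pos rfl]
      exact evT_mono (C.pt_mono (le_max_right _ _)) h₂

end Ctx


def FixP (p : PI) (w : Wd) : Set ℕ := {x | evW p w x = some x}

lemma fixP_fin {p : PI} {w : Wd} (hnil : w.2 ≠ []) : (FixP p w).Finite := by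
  refine ((p.dom_fin.union p.ran_fin).preimage
    (Set.injOn_of_injective (Equiv.injective w.1))).subset ?_
  intro x hx
  rcases hw : w.2 with _ | ⟨⟨ε, g⟩, l⟩
  · exact absurd hw hnil
  · have hx' : evT p w.2 (w.1 x) = some x := hx
    rw [hw] at hx'
    exact firststep hx'

def lastc (w : Wd) : P := (w.2.getLastD (true, 1)).2

lemma lastc_shape {w : Wd} {g₁ gk : P} {l₁ : Lt}
    (h : w.2 = (false, g₁) :: (l₁ ++ [(true, gk)])) : lastc w = gk := by
  rw [lastc, h, ← List.cons_append, List.getLastD_concat]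

lemma lastc_shape_flip {w : Wd} {g₁ gk : P} {l₁ : Lt}
    (h : flip w.2 = (false, g₁) :: (l₁ ++ [(true, gk)])) : lastc w = gk := by
  have h2 : w.2 = (true, g₁) :: (flip l₁ ++ [(false, gk)]) := by
    rw [← flip_flip w.2, h]
    simp [flip]
  rw [lastc, h2, ← List.cons_append, List.getLastD_concat]

lemma consts_flip (w : Wd) : consts (w.1, flip w.2) = consts w := by
  simp [consts, flip_snd]

namespace Ctx

variable (C : Ctx)

def FixF (w : Wd) : Set ℕ := {x | evF C.FF w.2 (w.1 x) = x}

def AD (w : Wd) : Set ℕ :=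
  {n | ∃ g₁ l₁ gk, w.2 = (false, g₁) :: (l₁ ++ [(true, gk)]) ∧ evF C.FF l₁ (g₁ n) = n}

def AR (w : Wd) : Set ℕ :=
  {n | ∃ g₁ l₁ gk, flip w.2 = (false, g₁) :: (l₁ ++ [(true, gk)]) ∧
    evF C.FF (flip l₁) (g₁ n) = n}

lemma inc {w : Wd} (hred : Red w.2) {i₀ : ℕ} (hi : C.enum i₀ = w) {t : ℕ} (ht : i₀ < t)
    {x : ℕ} (hx : x ∈ FixP (C.pt (t + 1)) w) (hold : x ∉ FixP (C.pt t) w) :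
    x = lastc w (C.chosen (C.pt t) t) ∧
      ((t % 2 = 0 ∧ t / 2 ∈ C.AD w) ∨ (¬ t % 2 = 0 ∧ t / 2 ∈ C.AR w)) := by
  have hxx : evW (C.step (C.pt t) t) w x = some x := hx
  set q := C.pt t with hq
  by_cases hpar : t % 2 = 0
  · unfold step at hxx
    rw [if_pos hpar] at hxx
    by_cases h : q.f (t / 2) = none
    · rw [dif_pos h] at hxx
      have HF : FreshFor q (t / 2) (C.chosen q t) (consts w) := by
        have h' := C.chosen_freshD q t ht
        rwa [hi] at h'
      rcases stage q (t / 2) (C.chosen q t) h (C.chosen_not_ran q t) w hred HF x hxx with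
        hL | ⟨g₁, l₁, gk, hsh, hxv, hev⟩
      · exact absurd hL hold
      · refine ⟨by rw [hxv, lastc_shape hsh], Or.inl ⟨hpar, ⟨g₁, l₁, gk, hsh, C.evT_evF hev⟩⟩⟩
    · rw [dif_neg h] at hxx
      exact absurd hxx hold
  · unfold step at hxx
    rw [if_neg hpar] at hxx
    by_cases h : q.g (t / 2) = none
    · rw [dif_pos h] at hxx
      have hxx' : evW ((q.swap).ext (t / 2) (C.chosen q t) h (C.chosen_not_dom q t))
          (w.1, flip w.2) x = some x := by
        show evT ((q.ext (C.chosen q t) (t / 2) (C.chosen_not_dom q t) h).swap)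
          (flip w.2) (w.1 x) = some x
        rw [evT_swap, flip_flip]
        exact hxx
      have HF : FreshFor q.swap (t / 2) (C.chosen q t) (consts (w.1, flip w.2)) := by
        rw [consts_flip]
        have h' := C.chosen_freshR q t ht
        rwa [hi] at h'
      rcases stage q.swap (t / 2) (C.chosen q t) h (C.chosen_not_dom q t)
          (w.1, flip w.2) (red_flip hred) HF x hxx' with
        hL | ⟨g₁, l₁, gk, hsh, hxv, hev⟩
      · exfalso
        apply hold
        show evT q w.2 (w.1 x) = some x
        rw [← flip_flip w.2, ← evT_swap]
        exact hL
      · refine ⟨by rw [hxv, lastc_shape_flip hsh], Or.inr ⟨hpar, ⟨g₁, l₁, gk, hsh, ?_⟩⟩⟩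
        rw [evT_swap] at hev
        exact C.evT_evF hev
    · rw [dif_neg h] at hxx
      exact absurd hxx hold

end Ctx

namespace Ctx

variable (C : Ctx)

lemma main : ∀ k : ℕ, ∀ w : Wd, (∀ c ∈ consts w, c ∈ C.G) → Red w.2 → w.2 ≠ [] →
    w.2.length = k → (C.FixF w).Finite := by
  intro k
  induction k using Nat.strong_induction_on with
  | _ k IH =>
  intro w hcG hred hnil hlen
  obtain ⟨i₀, hi⟩ := C.hsurj w hcG
  set s := i₀ + 1 with hs
  -- finiteness of the dom-pattern fixed set
  have hADfin : (C.AD w).Finite := by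
    by_cases hsh : ∃ g₁ l₁ gk, w.2 = (false, g₁) :: (l₁ ++ [(true, gk)])
    · obtain ⟨g₁, l₁, gk, hsh⟩ := hsh
      have hsub : C.AD w ⊆ {n | evF C.FF l₁ (g₁ n) = n} := by
        rintro n ⟨g₁', l₁', gk', hsh', hev⟩
        rw [hsh] at hsh'
        injection hsh' with h1 h2
        injection h1 with h1a h1b
        obtain ⟨h3, -⟩ := List.append_inj' h2.symm rfl
        rw [show g₁' = g₁ from h1b.symm, h3] at hev
        exact hev
      have hg₁G : g₁ ∈ C.G := hcG g₁ (by simp [consts, hsh])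
      rcases eq_or_ne l₁ [] with rfl | hl₁
      · have hg₁1 : g₁ ≠ 1 := by
          intro hg1
          have hchain : Red ((false, g₁) :: ([(true, gk)])) := by
            rw [← List.nil_append [(true, gk)], ← hsh]; exact hred
          have := (List.isChain_cons_cons.mp hchain).1 hg1
          simp at this
        refine (C.hG g₁ hg₁G hg₁1).subset (fun n hn => ?_) |>.subset hsub
        simpa using hn
      · have hlt : l₁.length < k := by
          rw [← hlen, hsh]; simp
        have := IH l₁.length hlt (g₁, l₁)
          (by
            intro c hc
            rcases List.mem_cons.mp hc with rfl | hc
            · exact hg₁G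
            · exact hcG c (by simp [consts, hsh]; simp [consts] at hc; tauto))
          (hred.infix ⟨[(false, g₁)], [(true, gk)], by rw [hsh]; simp⟩) hl₁ rfl
        exact this.subset hsub
    · have : C.AD w = ∅ := by
        ext n
        simp only [AD, Set.mem_setOf_eq, Set.mem_empty_iff_false, iff_false]
        rintro ⟨g₁, l₁, gk, hsh', -⟩
        exact hsh ⟨g₁, l₁, gk, hsh'⟩
      rw [this]; exact Set.finite_empty
  -- finiteness of the ran-pattern fixed set
  have hARfin : (C.AR w).Finite := by
    by_cases hsh : ∃ g₁ l₁ gk, flip w.2 = (false, g₁) :: (l₁ ++ [(true, gk)])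
    · obtain ⟨g₁, l₁, gk, hsh⟩ := hsh
      have hw2 : w.2 = (true, g₁) :: (flip l₁ ++ [(false, gk)]) := by
        rw [← flip_flip w.2, hsh]; simp [flip]
      have hsub : C.AR w ⊆ {n | evF C.FF (flip l₁) (g₁ n) = n} := by
        rintro n ⟨g₁', l₁', gk', hsh', hev⟩
        rw [hsh] at hsh'
        injection hsh' with h1 h2
        injection h1 with h1a h1b
        obtain ⟨h3, -⟩ := List.append_inj' h2.symm rfl
        rw [show g₁' = g₁ from h1b.symm, h3] at hev
        exact hev
      have hg₁G : g₁ ∈ C.G := hcG g₁ (by simp [consts, hw2])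
      rcases eq_or_ne l₁ [] with rfl | hl₁
      · have hg₁1 : g₁ ≠ 1 := by
          intro hg1
          have hchain : Red ((false, g₁) :: ([(true, gk)])) := by
            have := red_flip hred
            rw [hsh] at this
            simpa using this
          have := (List.isChain_cons_cons.mp hchain).1 hg1
          simp at this
        refine (C.hG g₁ hg₁G hg₁1).subset (fun n hn => ?_) |>.subset hsub
        simpa [flip] using hn
      · have hlt : (flip l₁).length < k := by
          rw [← hlen, hw2]; simp [flip]
        have := IH (flip l₁).length hlt (g₁, flip l₁)
          (by
            intro c hc
            rcases List.mem_cons.mp hc with rfl | hc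
            · exact hg₁G
            · exact hcG c (by simp [consts, hw2]; simp [consts] at hc; tauto))
          (by
            have h1 : Red l₁ := (red_flip hred).infix
              ⟨[(false, g₁)], [(true, gk)], by rw [hsh]; simp⟩
            exact red_flip h1)
          (by simpa [flip] using hl₁) rfl
        exact this.subset hsub
    · have : C.AR w = ∅ := by
        ext n
        simp only [AR, Set.mem_setOf_eq, Set.mem_empty_iff_false, iff_false]
        rintro ⟨g₁, l₁, gk, hsh', -⟩
        exact hsh ⟨g₁, l₁, gk, hsh'⟩
      rw [this]; exact Set.finite_empty
  -- the set of stages at which new fixed points can appear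
  set T : Set ℕ := {t : ℕ | (t % 2 = 0 ∧ t / 2 ∈ C.AD w) ∨ (¬ t % 2 = 0 ∧ t / 2 ∈ C.AR w)}
    with hT
  have hTfin : T.Finite := by
    have hsub : T ⊆ (fun n => 2 * n) '' (C.AD w) ∪ (fun n => 2 * n + 1) '' (C.AR w) := by
      intro t ht
      rcases ht with ⟨he, hm⟩ | ⟨ho, hm⟩
      · exact Or.inl ⟨t / 2, hm, by show 2 * (t / 2) = t; omega⟩
      · exact Or.inr ⟨t / 2, hm, by show 2 * (t / 2) + 1 = t; omega⟩
    exact ((hADfin.image _).union (hARfin.image _)).subset hsub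
  -- stagewise decomposition
  have hsubj : ∀ j : ℕ, ∀ x ∈ FixP (C.pt (s + j)) w, x ∈ FixP (C.pt s) w ∪
      ⋃ t ∈ T, {lastc w (C.chosen (C.pt t) t)} := by
    intro j
    induction j with
    | zero => intro x hx; exact Or.inl hx
    | succ j ih =>
      intro x hx
      by_cases hx' : x ∈ FixP (C.pt (s + j)) w
      · exact ih x hx'
      · have hinc := C.inc hred hi (t := s + j) (by omega) hx hx'
        right
        exact Set.mem_biUnion hinc.2 (by rw [hinc.1]; exact Set.mem_singleton _)
  have hcover : C.FixF w ⊆ FixP (C.pt s) w ∪ ⋃ t ∈ T, {lastc w (C.chosen (C.pt t) t)} := by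
    intro x hx
    obtain ⟨t, hTt⟩ := C.exists_evT w.2 (w.1 x)
    rw [show evF C.FF w.2 (w.1 x) = x from hx] at hTt
    have hT' : x ∈ FixP (C.pt (s + t)) w :=
      evT_mono (C.pt_mono (by omega : t ≤ s + t)) hTt
    exact hsubj t x hT'
  refine Set.Finite.subset ?_ hcover
  exact (fixP_fin hnil).union (hTfin.biUnion fun t _ => Set.finite_singleton _)

end Ctx

namespace Ctx

variable (C : Ctx)

noncomputable def wPerm (w : Wd) : P :=
  w.2.foldl (fun σ e => e.2 * (if e.1 then C.FF else C.FF⁻¹) * σ) w.1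

lemma foldl_apply : ∀ (l : Lt) (σ : P) (x : ℕ),
    (l.foldl (fun σ e => e.2 * (if e.1 then C.FF else C.FF⁻¹) * σ) σ) x
      = evF C.FF l (σ x) := by
  intro l
  induction l with
  | nil => intro σ x; rfl
  | cons e l ih =>
    obtain ⟨ε, g⟩ := e
    intro σ x
    rw [List.foldl_cons, ih, evF_cons]
    congr 1
    cases ε
    · simp [Equiv.Perm.mul_apply, Equiv.Perm.inv_def]
    · simp [Equiv.Perm.mul_apply]

lemma wPerm_apply (w : Wd) (x : ℕ) : C.wPerm w x = evF C.FF w.2 (w.1 x) :=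
  C.foldl_apply w.2 w.1 x

/-- the property established for all elements of the extended group. -/
def Q (h : P) : Prop :=
  h ∈ C.G ∨ ∃ w : Wd, (∀ c ∈ consts w, c ∈ C.G) ∧ Red w.2 ∧ w.2 ≠ [] ∧ h = C.wPerm w

lemma fF_step (ε : Bool) (z : ℕ) :
    (if ε = true then C.FF z else C.FF.symm z) = (if ε = true then C.FF else C.FF⁻¹) z := by
  cases ε <;> rfl

lemma fF_cancel (ε : Bool) (z : ℕ) :
    (if (!ε) = true then C.FF ((if ε = true then C.FF else C.FF⁻¹) z)
      else C.FF.symm ((if ε = true then C.FF else C.FF⁻¹) z)) = z := by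
  cases ε <;> simp

lemma Q_mul_fF {x : P} (hx : C.Q x) (ε : Bool) :
    C.Q (x * (if ε = true then C.FF else C.FF⁻¹)) := by
  rcases hx with hxG | ⟨w, hwc, hwr, hwn, rfl⟩
  · -- x ∈ G : single-letter word
    right
    refine ⟨(1, [(ε, x)]), ?_, ?_, by simp, ?_⟩
    · intro c hc
      simp [consts] at hc
      rcases hc with rfl | rfl
      · exact C.G.one_mem
      · exact hxG
    · simp [Red, List.Chain', List.isChain_singleton]
    · ext z
      rw [wPerm_apply]
      simp only [evF_cons, evF_nil, Equiv.Perm.mul_apply, Equiv.Perm.one_apply]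
      rw [C.fF_step]
  · -- x is given by a word
    obtain ⟨g0, l⟩ := w
    cases l with
    | nil => exact absurd rfl hwn
    | cons e rest =>
      obtain ⟨ε', g'⟩ := e
      by_cases hcan : g0 = 1 ∧ ε' = !ε
      · -- cancellation
        obtain ⟨hg0, hε'⟩ := hcan
        have heq : C.wPerm (g0, (ε', g') :: rest) * (if ε = true then C.FF else C.FF⁻¹)
            = C.wPerm (g', rest) := by
          ext z
          rw [Equiv.Perm.mul_apply, wPerm_apply, wPerm_apply, hg0, hε']
          simp only [evF_cons, Equiv.Perm.one_apply]
          rw [C.fF_cancel]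
        rw [heq]
        rcases eq_or_ne rest [] with rfl | hrest
        · left
          have : C.wPerm (g', []) = g' := by
            ext z; rw [wPerm_apply]; rfl
          rw [this]
          exact hwc g' (by simp [consts])
        · right
          refine ⟨(g', rest), ?_, hwr.tail, hrest, rfl⟩
          intro c hc
          apply hwc
          simp [consts] at hc ⊢
          tauto
      · -- no cancellation
        right
        refine ⟨(1, (ε, g0) :: (ε', g') :: rest), ?_, ?_, by simp, ?_⟩
        · intro c hc
          simp [consts] at hc ⊢
          rcases hc with rfl | h
          · exact C.G.one_mem
          · apply hwc; simp [consts]; tauto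
        · rw [Red, List.Chain', List.isChain_cons_cons]
          refine ⟨?_, hwr⟩
          intro h1
          by_contra hne
          exact hcan ⟨h1, by cases ε <;> cases ε' <;> simp_all⟩
        · ext z
          rw [Equiv.Perm.mul_apply, wPerm_apply, wPerm_apply]
          simp only [evF_cons, Equiv.Perm.one_apply]
          cases ε <;> cases ε' <;> simp [Equiv.Perm.inv_def]

lemma rep {h : P} (hh : h ∈ Subgroup.closure (insert C.FF (C.G : Set P))) : C.Q h := by
  induction hh using Subgroup.closure_induction_right with
  | one => exact Or.inl C.G.one_mem
  | mul_right x hx y hy ih =>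
    rcases Set.mem_insert_iff.mp hy with rfl | hyG
    · have := C.Q_mul_fF ih true
      simpa using this
    · rcases ih with hxG | ⟨w, hwc, hwr, hwn, rfl⟩
      · exact Or.inl (C.G.mul_mem hxG hyG)
      · right
        refine ⟨(w.1 * y, w.2), ?_, hwr, hwn, ?_⟩
        · intro c hc
          rcases List.mem_cons.mp hc with rfl | hc
          · exact C.G.mul_mem (hwc w.1 (by simp [consts])) hyG
          · exact hwc c (by simp [consts] at hc ⊢; tauto)
        · ext z
          rw [Equiv.Perm.mul_apply, wPerm_apply, wPerm_apply]
          rfl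
  | mul_inv_cancel x hx y hy ih =>
    rcases Set.mem_insert_iff.mp hy with rfl | hyG
    · have := C.Q_mul_fF ih false
      simpa using this
    · rcases ih with hxG | ⟨w, hwc, hwr, hwn, rfl⟩
      · exact Or.inl (C.G.mul_mem hxG (C.G.inv_mem hyG))
      · right
        refine ⟨(w.1 * y⁻¹, w.2), ?_, hwr, hwn, ?_⟩
        · intro c hc
          rcases List.mem_cons.mp hc with rfl | hc
          · exact C.G.mul_mem (hwc w.1 (by simp [consts])) (C.G.inv_mem hyG)
          · exact hwc c (by simp [consts] at hc ⊢; tauto)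
        · ext z
          rw [Equiv.Perm.mul_apply, wPerm_apply, wPerm_apply]
          rfl

end Ctx

theorem not_countable_of_max (G : Subgroup P)
    (hG : ∀ g ∈ G, g ≠ 1 → {n : ℕ | g n = n}.Finite)
    (hmax : ∀ H : Subgroup P, (∀ g ∈ H, g ≠ 1 → {n : ℕ | g n = n}.Finite) → G ≤ H → G = H) :
    ¬ (G : Set P).Countable := by
  intro hcnt
  haveI : Countable ↥(G : Set P) := hcnt.to_subtype
  haveI : Nonempty (↥(G : Set P) × List (Bool × ↥(G : Set P))) := ⟨⟨⟨1, G.one_mem⟩, []⟩⟩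
  obtain ⟨e0, he0⟩ := exists_surjective_nat (↥(G : Set P) × List (Bool × ↥(G : Set P)))
  let θ : ↥(G : Set P) × List (Bool × ↥(G : Set P)) → Wd :=
    fun d => ((d.1 : P), d.2.map (fun e => (e.1, (e.2 : P))))
  have hθc : ∀ d, ∀ c ∈ consts (θ d), c ∈ G := by
    intro d c hc
    rcases List.mem_cons.mp hc with rfl | hc
    · exact d.1.2
    · simp only [θ, List.map_map, List.mem_map] at hc
      obtain ⟨e, -, rfl⟩ := hc
      exact e.2.2
  let C : Ctx := {
    G := G
    hG := hG
    enum := fun i => θ (e0 i)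
    henum := fun i => hθc (e0 i)
    hsurj := by
      intro w hw
      have hmem : ∀ e ∈ w.2, e.2 ∈ G := fun e he =>
        hw e.2 (List.mem_cons_of_mem _ (List.mem_map_of_mem (f := Prod.snd) he))
      let d : ↥(G : Set P) × List (Bool × ↥(G : Set P)) :=
        (⟨w.1, hw w.1 List.mem_cons_self⟩,
          w.2.pmap (fun (e : Bool × P) (he : e.2 ∈ G) =>
            (e.1, (⟨e.2, he⟩ : ↥(G : Set P)))) hmem)
      obtain ⟨i, hi⟩ := he0 d
      refine ⟨i, ?_⟩
      show θ (e0 i) = w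
      rw [hi]
      show ((w.1 : P), _) = w
      refine Prod.ext rfl ?_
      show (w.2.pmap (fun (e : Bool × P) (he : e.2 ∈ G) =>
          (e.1, (⟨e.2, he⟩ : ↥(G : Set P)))) hmem).map
        (fun e => (e.1, (e.2 : P))) = w.2
      rw [List.map_pmap]
      have : ∀ (l : Lt) (h : ∀ e ∈ l, e.2 ∈ G),
          l.pmap (fun (e : Bool × P) (he : e.2 ∈ G) => (e.1, ((⟨e.2, he⟩ : ↥(G : Set P)) : P))) h = l := by
        intro l
        induction l with
        | nil => intro h; rfl
        | cons e l ih => intro h; simp [ih]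
      exact this w.2 hmem }
  -- fixed points of words are finite
  have hwfin : ∀ w : Wd, (∀ c ∈ consts w, c ∈ G) → Red w.2 → w.2 ≠ [] →
      {n : ℕ | C.wPerm w n = n}.Finite := by
    intro w h1 h2 h3
    have hm := C.main w.2.length w h1 h2 h3 rfl
    refine hm.subset ?_
    intro n hn
    show evF C.FF w.2 (w.1 n) = n
    rw [← C.wPerm_apply]
    exact hn
  -- C.FF is not in G
  have hFF : C.FF ∉ G := by
    intro hFG
    have hfin := hwfin (C.FF⁻¹, [(true, 1)])
      (by
        intro c hc
        rcases List.mem_cons.mp hc with rfl | hc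
        · exact G.inv_mem hFG
        · simp at hc
          rw [hc]
          exact G.one_mem)
      (by simp [Red, List.Chain', List.isChain_singleton]) (by simp)
    have huniv : {n : ℕ | C.wPerm (C.FF⁻¹, [(true, 1)]) n = n} = Set.univ := by
      ext n
      simp only [Set.mem_setOf_eq, Set.mem_univ, iff_true]
      rw [C.wPerm_apply]
      simp [Equiv.Perm.inv_def]
    rw [huniv] at hfin
    exact Set.infinite_univ hfin
  -- the extended subgroup
  have hHcof : ∀ h ∈ Subgroup.closure (insert C.FF (G : Set P)), h ≠ 1 →
      {n : ℕ | h n = n}.Finite := by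
    intro h hh hne
    rcases C.rep hh with hG' | ⟨w, h1, h2, h3, rfl⟩
    · exact hG h hG' hne
    · exact hwfin w h1 h2 h3
  have hGH : G ≤ Subgroup.closure (insert C.FF (G : Set P)) :=
    fun g hg => Subgroup.subset_closure (Set.mem_insert_of_mem _ hg)
  have hEq := hmax _ hHcof hGH
  apply hFF
  rw [hEq]
  exact Subgroup.subset_closure (Set.mem_insert _ _)

end MCG

def Cofinitary (G : Subgroup (Equiv.Perm ℕ)) : Prop :=
  ∀ g ∈ G, g ≠ 1 → {n : ℕ | g n = n}.Finite

theorem stmt0 (G : Subgroup (Equiv.Perm ℕ)) (hG : Cofinitary G)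
    (hmax : ∀ H : Subgroup (Equiv.Perm ℕ), Cofinitary H → G ≤ H → G = H) :
    ¬ (G : Set (Equiv.Perm ℕ)).Countable :=
  MCG.not_countable_of_max G hG hmax
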